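/- Let c, d, r be positive integers with gcd(r, d) = 1 and gcd(c, d) = 1. Then the sum over integers a with 1 ≤ a ≤ cd, gcd(a, cd) = 1, and a ≡ r (mod d), of e(a/(cd)) equals μ(c)·e(-r·d̄/c)·e(r/(cd)), where d̄ is an inverse of d modulo c. -/

import Mathlib

open Complex Real

/-- `e x = exp(2πix)` -/
noncomputable def eFun (x : ℝ) : ℂ := Complex.exp (2 * Real.pi * Complex.I * x)

lemma eFun_add (x y : ℝ) : eFun (x + y) = eFun x * eFun y := by
  simp [eFun, mul_add, Complex.exp_add]

lemma eFun_int (k : ℤ) : eFun k = 1 := by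
  unfold eFun
  rw [show (2 * (Real.pi:ℂ) * Complex.I * ((k:ℝ):ℂ)) = (k:ℤ) * (2 * Real.pi * Complex.I) by
    push_cast; ring]
  exact Complex.exp_int_mul_two_pi_mul_I k

lemma eFun_add_int (x : ℝ) (k : ℤ) : eFun (x + k) = eFun x := by
  rw [eFun_add, eFun_int, mul_one]

lemma eFun_geom (m : ℕ) (hm : 0 < m) :
    ∑ j ∈ Finset.range m, eFun (j / m) = if m = 1 then 1 else 0 := by
  have hprim := Complex.isPrimitiveRoot_exp m hm.ne'
  have hpow : ∀ j : ℕ, eFun ((j : ℝ) / m) = Complex.exp (2 * Real.pi * Complex.I / m) ^ j := by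
    intro j
    rw [← Complex.exp_nat_mul]
    unfold eFun
    congr 1
    have : ((m:ℝ):ℂ) ≠ 0 := by
      simp [Nat.cast_ne_zero, hm.ne']
    push_cast
    field_simp
  simp_rw [hpow]
  rcases eq_or_lt_of_le (Nat.one_le_iff_ne_zero.mpr hm.ne') with h1 | h1
  · rw [← h1]
    simp
  · rw [hprim.geom_sum_eq_zero h1, if_neg h1.ne']

lemma moebius_divisor_sum (n : ℕ) :
    ∑ k ∈ n.divisors, (ArithmeticFunction.moebius k : ℂ) = if n = 1 then 1 else 0 := by
  have h : (((ArithmeticFunction.moebius : ArithmeticFunction ℤ) : ArithmeticFunction ℂ) *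
      ArithmeticFunction.zeta) n = (1 : ArithmeticFunction ℂ) n := by
    rw [ArithmeticFunction.coe_moebius_mul_coe_zeta]
  rw [ArithmeticFunction.coe_mul_zeta_apply] at h
  simp only [ArithmeticFunction.intCoe_apply, ArithmeticFunction.one_apply] at h
  exact h

lemma ramanujan_one (c : ℕ) (hc : 0 < c) :
    ∑ b ∈ (Finset.range c).filter (fun b => Nat.gcd b c = 1), eFun ((b : ℝ) / c)
      = (ArithmeticFunction.moebius c : ℂ) := by
  rw [Finset.sum_filter]
  have key : ∀ b ∈ Finset.range c,
      (if Nat.gcd b c = 1 then eFun ((b:ℝ)/c) else 0)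
        = ∑ k ∈ c.divisors, (if k ∣ b then (ArithmeticFunction.moebius k : ℂ) * eFun ((b:ℝ)/c)
            else 0) := by
    intro b _
    rw [← Finset.sum_filter, ← Finset.sum_mul]
    have hset : c.divisors.filter (· ∣ b) = (Nat.gcd b c).divisors := by
      ext k
      simp only [Finset.mem_filter, Nat.mem_divisors, Nat.dvd_gcd_iff]
      constructor
      · rintro ⟨⟨h1, h2⟩, h3⟩
        exact ⟨⟨h3, h1⟩, Nat.gcd_ne_zero_right hc.ne'⟩
      · rintro ⟨⟨h1, h2⟩, _⟩
        exact ⟨⟨h2, hc.ne'⟩, h1⟩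
    rw [hset, moebius_divisor_sum]
    by_cases h : Nat.gcd b c = 1 <;> simp [h]
  rw [Finset.sum_congr rfl key, Finset.sum_comm]
  have inner : ∀ k ∈ c.divisors,
      (∑ b ∈ Finset.range c, if k ∣ b then (ArithmeticFunction.moebius k : ℂ) * eFun ((b:ℝ)/c)
        else 0) = if k = c then (ArithmeticFunction.moebius k : ℂ) else 0 := by
    intro k hk
    obtain ⟨hkdvd, hc0⟩ := Nat.mem_divisors.mp hk
    have hkpos : 0 < k := Nat.pos_of_dvd_of_pos hkdvd hc
    have hq : 0 < c / k := Nat.div_pos (Nat.le_of_dvd hc hkdvd) hkpos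
    rw [← Finset.sum_filter]
    have hbij : ∑ b ∈ (Finset.range c).filter (fun b => k ∣ b),
        (ArithmeticFunction.moebius k : ℂ) * eFun ((b:ℝ)/c)
        = ∑ j ∈ Finset.range (c / k),
          (ArithmeticFunction.moebius k : ℂ) * eFun ((j:ℝ)/(c/k : ℕ)) := by
      refine Finset.sum_nbij' (fun b => b / k) (fun j => k * j) ?_ ?_ ?_ ?_ ?_
      · intro b hb
        simp only [Finset.mem_filter, Finset.mem_range] at hb
        exact Finset.mem_range.mpr (Nat.div_lt_div_of_lt_of_dvd hkdvd hb.1)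
      · intro j hj
        simp only [Finset.mem_range] at hj
        refine Finset.mem_filter.mpr ⟨Finset.mem_range.mpr ?_, Dvd.intro j rfl⟩
        calc k * j < k * (c / k) := (Nat.mul_lt_mul_left hkpos).mpr hj
          _ = c := Nat.mul_div_cancel' hkdvd
      · intro b hb
        simp only [Finset.mem_filter] at hb
        exact Nat.mul_div_cancel' hb.2
      · intro j _
        exact Nat.mul_div_cancel_left j hkpos
      · intro b hb
        simp only [Finset.mem_filter] at hb
        obtain ⟨t, rfl⟩ := hb.2
        congr 2
        rw [Nat.mul_div_cancel_left t hkpos]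
        have h1 : (c:ℝ) ≠ 0 := Nat.cast_ne_zero.mpr hc0
        have h2 : ((c / k : ℕ):ℝ) ≠ 0 := Nat.cast_ne_zero.mpr hq.ne'
        have h3 : (c:ℝ) = (k:ℝ) * ((c/k : ℕ):ℝ) := by
          rw [← Nat.cast_mul, Nat.mul_div_cancel' hkdvd]
        rw [h3]
        push_cast
        have hk0 : (k:ℝ) ≠ 0 := Nat.cast_ne_zero.mpr hkpos.ne'
        field_simp
    rw [hbij, ← Finset.mul_sum, eFun_geom (c/k) hq]
    have : c / k = 1 ↔ k = c := by
      constructor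
      · intro h
        have h9 := Nat.mul_div_cancel' hkdvd
        rw [h, mul_one] at h9
        exact h9
      · rintro rfl
        exact Nat.div_self hc
    by_cases h : k = c
    · rw [if_pos (this.mpr h), if_pos h, mul_one]
    · rw [if_neg (fun hh => h (this.mp hh)), if_neg h, mul_zero]
  rw [Finset.sum_congr rfl inner, Finset.sum_ite_eq' c.divisors c
    (fun k => (ArithmeticFunction.moebius k : ℂ)), if_pos (Nat.mem_divisors_self c hc.ne')]

lemma gcd_eq_of_modEq {x y c : ℕ} (h : x ≡ y [MOD c]) : Nat.gcd x c = Nat.gcd y c := by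
  rw [Nat.gcd_comm x, Nat.gcd_comm y, Nat.gcd_rec c x, Nat.gcd_rec c y, h]

lemma icc_modEq_inj {n x y : ℕ} (hn : 0 < n) (hx1 : 1 ≤ x) (hx2 : x ≤ n) (hy1 : 1 ≤ y)
    (hy2 : y ≤ n) (h : x ≡ y [MOD n]) : x = y := by
  unfold Nat.ModEq at h
  rcases eq_or_lt_of_le hx2 with h1 | h1 <;> rcases eq_or_lt_of_le hy2 with h2 | h2
  · omega
  · subst h1
    rw [Nat.mod_self, Nat.mod_eq_of_lt h2] at h
    omega
  · subst h2
    rw [Nat.mod_self, Nat.mod_eq_of_lt h1] at h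
    omega
  · rwa [Nat.mod_eq_of_lt h1, Nat.mod_eq_of_lt h2] at h

theorem exp_sum_coprime_case' (c d r dinv : ℕ) (hc : 0 < c) (hd : 0 < d) (hr : 0 < r)
    (hrd : Nat.gcd r d = 1) (hcd : Nat.gcd c d = 1)
    (hdinv : d * dinv ≡ 1 [MOD c]) :
    (∑ a ∈ (Finset.Icc 1 (c * d)).filter
        (fun a => Nat.gcd a (c * d) = 1 ∧ a ≡ r [MOD d]), eFun (a / (c * d))) =
      (ArithmeticFunction.moebius c : ℂ) * eFun (-((r * dinv : ℕ) : ℝ) / c) *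
        eFun (r / (c * d)) := by
  have hn : 0 < c * d := Nat.mul_pos hc hd
  -- coprimality facts
  have hdinvc : Nat.Coprime dinv c := by
    have h1 : Nat.gcd (d * dinv) c = Nat.gcd 1 c := gcd_eq_of_modEq hdinv
    have h2 : Nat.Coprime (d * dinv) c := by
      rw [Nat.Coprime, h1, Nat.gcd_one_left]
    exact h2.coprime_dvd_left (dvd_mul_left dinv d)
  have hdc : Nat.Coprime d c := Nat.Coprime.symm hcd
  -- the main bijection
  have hbij : (∑ a ∈ (Finset.Icc 1 (c * d)).filter
        (fun a => Nat.gcd a (c * d) = 1 ∧ a ≡ r [MOD d]), eFun (a / (c * d)))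
      = ∑ v ∈ (Finset.range c).filter (fun v => Nat.gcd v c = 1),
          eFun (-((r * dinv : ℕ) : ℝ) / c) * eFun ((r:ℝ) / (c * d)) * eFun ((v:ℝ) / c) := by
    refine Finset.sum_bij (fun a _ => (a * dinv) % c) ?_ ?_ ?_ ?_
    · -- maps into target
      intro a ha
      simp only [Finset.mem_filter, Finset.mem_Icc] at ha
      obtain ⟨⟨ha1, ha2⟩, hga, har⟩ := ha
      refine Finset.mem_filter.mpr ⟨Finset.mem_range.mpr (Nat.mod_lt _ hc), ?_⟩
      have hac : Nat.Coprime a c := Nat.Coprime.coprime_dvd_right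
        (dvd_mul_right c d) hga
      have h1 : Nat.Coprime (a * dinv) c := hac.mul hdinvc
      have h2 : a * dinv % c ≡ a * dinv [MOD c] := (Nat.mod_modEq _ _)
      rw [gcd_eq_of_modEq h2]
      exact h1
    · -- injectivity
      intro a₁ ha₁ a₂ ha₂ heq
      simp only [Finset.mem_filter, Finset.mem_Icc] at ha₁ ha₂
      obtain ⟨⟨h11, h12⟩, hg1, hr1⟩ := ha₁
      obtain ⟨⟨h21, h22⟩, hg2, hr2⟩ := ha₂
      have hmc : a₁ * dinv ≡ a₂ * dinv [MOD c] := heq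
      have h3 : a₁ * (d * dinv) ≡ a₂ * (d * dinv) [MOD c] := by
        have := hmc.mul_left d
        calc a₁ * (d * dinv) = d * (a₁ * dinv) := by ring
          _ ≡ d * (a₂ * dinv) [MOD c] := this
          _ = a₂ * (d * dinv) := by ring
      have h4 : a₁ ≡ a₂ [MOD c] := by
        calc a₁ = a₁ * 1 := (mul_one _).symm
          _ ≡ a₁ * (d * dinv) [MOD c] := (hdinv.mul_left a₁).symm
          _ ≡ a₂ * (d * dinv) [MOD c] := h3
          _ ≡ a₂ * 1 [MOD c] := hdinv.mul_left a₂
          _ = a₂ := mul_one _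
      have h5 : a₁ ≡ a₂ [MOD d] := hr1.trans hr2.symm
      have h6 : a₁ ≡ a₂ [MOD c * d] :=
        (Nat.modEq_and_modEq_iff_modEq_mul hcd).mp ⟨h4, h5⟩
      exact icc_modEq_inj hn h11 h12 h21 h22 h6
    · -- surjectivity
      intro v hv
      simp only [Finset.mem_filter, Finset.mem_range] at hv
      obtain ⟨hvlt, hvc⟩ := hv
      have hk1 := (Nat.chineseRemainder hcd (v * d) r).2.1
      have hk2 := (Nat.chineseRemainder hcd (v * d) r).2.2
      have hklt : ((Nat.chineseRemainder hcd (v * d) r : ℕ)) < c * d :=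
        Nat.chineseRemainder_lt_mul hcd (v * d) r hc.ne' hd.ne'
      set k := ((Nat.chineseRemainder hcd (v * d) r : ℕ)) with hkdef
      set a := if k = 0 then c * d else k with ha_def
      have hamem1 : 1 ≤ a ∧ a ≤ c * d := by
        by_cases h : k = 0
        · rw [ha_def, if_pos h]
          omega
        · rw [ha_def, if_neg h]
          omega
      have hakc : a ≡ k [MOD c] := by
        by_cases h : k = 0
        · simp only [ha_def, if_pos h, h]
          exact (Nat.modEq_zero_iff_dvd).mpr (dvd_mul_right c d)
        · rw [ha_def, if_neg h]
      have hakd : a ≡ k [MOD d] := by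
        by_cases h : k = 0
        · simp only [ha_def, if_pos h, h]
          exact (Nat.modEq_zero_iff_dvd).mpr (dvd_mul_left d c)
        · rw [ha_def, if_neg h]
      have hac : Nat.Coprime a c := by
        have : Nat.gcd a c = Nat.gcd (v * d) c := gcd_eq_of_modEq (hakc.trans hk1)
        rw [Nat.Coprime, this]
        exact Nat.Coprime.mul hvc hdc
      have had : Nat.Coprime a d := by
        have : Nat.gcd a d = Nat.gcd r d := gcd_eq_of_modEq (hakd.trans hk2)
        rw [Nat.Coprime, this]
        exact hrd
      refine ⟨a, Finset.mem_filter.mpr ⟨Finset.mem_Icc.mpr hamem1,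
        hac.mul_right had, hakd.trans hk2⟩, ?_⟩
      have h7 : a * dinv ≡ v [MOD c] := by
        calc a * dinv ≡ v * d * dinv [MOD c] := (hakc.trans hk1).mul_right dinv
          _ = v * (d * dinv) := by ring
          _ ≡ v * 1 [MOD c] := hdinv.mul_left v
          _ = v := mul_one v
      have := h7
      unfold Nat.ModEq at this
      rw [Nat.mod_eq_of_lt hvlt] at this
      exact this
    · -- value equality
      intro a ha
      simp only [Finset.mem_filter, Finset.mem_Icc] at ha
      obtain ⟨⟨ha1, ha2⟩, hga, har⟩ := ha
      set v := a * dinv % c with hv_def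
      -- integer facts
      obtain ⟨t, ht⟩ := (Nat.modEq_iff_dvd).mp har  -- (r:ℤ) - a = d * t
      -- a = r + d * s with s = -t
      have hs : (a : ℤ) = r + d * (-t) := by linear_combination -ht
      have hbv : (c:ℤ) ∣ ((a * dinv : ℕ) : ℤ) - (v : ℤ) := (Nat.modEq_iff_dvd).mp (Nat.mod_modEq _ _)
      have hcv : (c:ℤ) ∣ (1 : ℤ) - ((d * dinv : ℕ) : ℤ) := (Nat.modEq_iff_dvd).mp hdinv
      obtain ⟨y, hy⟩ := hbv
      obtain ⟨x, hx⟩ := hcv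
      have hKdvd : (c:ℤ) ∣ (-t + r * dinv - v) := by
        refine ⟨(-t) * x + y, ?_⟩
        push_cast at hx hy ⊢
        linear_combination (-t) * hx + hy - (dinv : ℤ) * hs
      obtain ⟨K, hK⟩ := hKdvd
      have hxr : (a : ℝ) / (c * d) =
          (-((r * dinv : ℕ) : ℝ) / c + ((r:ℝ) / (c * d) + (v:ℝ) / c)) + (K : ℝ) := by
        have hc0 : (c:ℝ) ≠ 0 := Nat.cast_ne_zero.mpr hc.ne'
        have hd0 : (d:ℝ) ≠ 0 := Nat.cast_ne_zero.mpr hd.ne'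
        have h1 : (a : ℝ) = r + d * (-(t:ℝ)) := by exact_mod_cast hs
        have h2 : (-(t:ℝ)) + r * dinv - v = c * K := by exact_mod_cast hK
        rw [h1]
        push_cast
        field_simp
        ring_nf
        linear_combination (d:ℝ) * h2
      rw [hxr, eFun_add_int, eFun_add, eFun_add]
      ring
  rw [hbij, ← Finset.mul_sum, ramanujan_one c hc]
  ring
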